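/- Let α : V × V → W be a symmetric bilinear map with curvature R(X,Y,Z,T) = ⟨α(X,T),α(Y,Z)⟩ − ⟨α(X,Z),α(Y,T)⟩, nullity Γ of R, relative nullity Δ_α, and β := α|_{V × Γ}. If dim Δ_α ≤ dim V − dim W − 1, then dim S(β) ≤ dim W − 1, where S(β) = span{α(X,Z) : X ∈ V, Z ∈ Γ}. In other words, S(β) is a proper subspace of W. -/

import Mathlib

open Module LinearMap RealInnerProductSpace

open Polynomial in
private lemma span_beta_aux_det {r : ℕ} (C : Matrix (Fin r) (Fin r) ℝ) :
    ∃ t : ℝ, t ≠ 0 ∧ IsUnit (1 + t • C).det := by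
  set M : Matrix (Fin r) (Fin r) ℝ[X] := 1 + (X : ℝ[X]) • C.map Polynomial.C with hM
  have key : ∀ t : ℝ, eval t M.det = (1 + t • C).det := by
    intro t
    have : (evalRingHom t).mapMatrix M = 1 + t • C := by
      ext i j
      simp [hM, Matrix.one_apply, apply_ite]; ring
    rw [← this, ← RingHom.map_det]
    rfl
  have h0 : eval 0 M.det = 1 := by rw [key]; simp
  have hq : M.det ≠ 0 := by intro h; rw [h] at h0; simp at h0
  have hfin : ({0} ∪ {x : ℝ | IsRoot M.det x}).Finite :=
    (Set.finite_singleton 0).union (Polynomial.finite_setOf_isRoot hq)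
  obtain ⟨t, ht⟩ := hfin.infinite_compl.nonempty
  simp only [Set.mem_compl_iff, Set.mem_union, Set.mem_singleton_iff, Set.mem_setOf_eq,
    not_or] at ht
  exact ⟨t, ht.1, isUnit_iff_ne_zero.mpr (by rw [← key]; exact ht.2)⟩

/-- If `ν ≤ n - p - 1`, then `S(β)` is a proper subspace of `W`: `dim S(β) ≤ p - 1`. -/
theorem span_beta_proper
    {V W : Type*} [AddCommGroup V] [Module ℝ V] [FiniteDimensional ℝ V]
    [NormedAddCommGroup W] [InnerProductSpace ℝ W] [FiniteDimensional ℝ W]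
    (α : V →ₗ[ℝ] V →ₗ[ℝ] W)
    (hsymm : ∀ X Y : V, α X Y = α Y X)
    (Γ : Submodule ℝ V)
    (hΓ : ∀ X : V, X ∈ Γ ↔
      ∀ Y Z T : V, ⟪α X T, α Y Z⟫ - ⟪α X Z, α Y T⟫ = 0)
    (hν : finrank ℝ (ker α) + finrank ℝ W + 1 ≤ finrank ℝ V) :
    finrank ℝ (Submodule.span ℝ {w : W | ∃ X : V, ∃ Z ∈ Γ, w = α X Z}) < finrank ℝ W := by
  by_contra hcon
  push_neg at hcon
  set S := Submodule.span ℝ {w : W | ∃ X : V, ∃ Z ∈ Γ, w = α X Z} with hS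
  have hStop : S = ⊤ :=
    Submodule.eq_top_of_finrank_eq (le_antisymm (Submodule.finrank_le S) hcon)
  -- the key exchange identity, valid when `Z ∈ Γ`
  have perp : ∀ X Y T Z : V, Z ∈ Γ → ⟪α X Y, α T Z⟫ = ⟪α X Z, α T Y⟫ := by
    intro X Y T Z hZ
    have H : ∀ Y' Z' T' : V, ⟪α Z T', α Y' Z'⟫ = ⟪α Z Z', α Y' T'⟫ :=
      fun Y' Z' T' => sub_eq_zero.mp ((hΓ Z).mp hZ Y' Z' T')
    calc ⟪α X Y, α T Z⟫ = ⟪α Z T, α X Y⟫ := by rw [real_inner_comm, hsymm T Z]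
      _ = ⟪α Z Y, α X T⟫ := H X Y T
      _ = ⟪α Z Y, α T X⟫ := by rw [hsymm X T]
      _ = ⟪α Z X, α T Y⟫ := (H T Y X).symm
      _ = ⟪α X Z, α T Y⟫ := by rw [hsymm Z X]
  -- a regular element Z₀ of Γ
  set f : V → ℕ := fun Z => finrank ℝ (LinearMap.range (α.flip Z)) with hf
  have hbdd : BddAbove (f '' (Γ : Set V)) :=
    ⟨finrank ℝ W, by rintro _ ⟨Z, _, rfl⟩; exact Submodule.finrank_le _⟩
  have hne : (f '' (Γ : Set V)).Nonempty := ⟨f 0, ⟨0, Γ.zero_mem, rfl⟩⟩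
  obtain ⟨Z₀, hZ₀Γ, hZ₀⟩ := Nat.sSup_mem hne hbdd
  have hmax : ∀ Z ∈ Γ, f Z ≤ f Z₀ := fun Z hZ => hZ₀ ▸ le_csSup hbdd ⟨Z, hZ, rfl⟩
  -- the key claim: the kernel of α(·, Z₀) kills all of Γ
  have key : ∀ X : V, α X Z₀ = 0 → ∀ Z ∈ Γ, α X Z = 0 := by
    intro X hX Z hZ
    by_contra hw
    set w : W := α X Z with hwdef
    set U := LinearMap.range (α.flip Z₀) with hU
    set r := finrank ℝ U with hr
    have hperpU : ∀ u ∈ U, ⟪w, u⟫ = 0 := by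
      rintro _ ⟨Y, rfl⟩
      show ⟪α X Z, α Y Z₀⟫ = 0
      rw [perp X Z Y Z₀ hZ₀Γ, hX]
      simp
    set bU : Basis (Fin r) ℝ U := finBasis ℝ U with hbU
    have hlift : ∀ i : Fin r, ∃ Yi : V, α Yi Z₀ = (bU i : W) := fun i => (bU i).2
    choose Y hY using hlift
    set P := U.orthogonalProjectionOnto with hP
    set C : Matrix (Fin r) (Fin r) ℝ :=
      Matrix.of (fun i j => bU.repr (P (α (Y j) Z)) i) with hC
    obtain ⟨t, ht0, htdet⟩ := span_beta_aux_det C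
    set Z' := Z₀ + t • Z with hZ'
    have hZ'Γ : Z' ∈ Γ := Γ.add_mem hZ₀Γ (Γ.smul_mem t hZ)
    have hXZ' : α X Z' = t • w := by
      rw [hZ', map_add, map_smul, hX, zero_add, hwdef]
    have hYZ' : ∀ i, α (Y i) Z' = (bU i : W) + t • α (Y i) Z := by
      intro i; rw [hZ', map_add, map_smul, hY i]
    set g : Fin (r + 1) → W := Fin.cons (α X Z') (fun i => α (Y i) Z') with hg
    have hli : LinearIndependent ℝ g := by
      rw [Fintype.linearIndependent_iff]
      intro c hc
      -- first, the coefficients of the `Y i` vanish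
      have hsum : c 0 • α X Z' + ∑ i : Fin r, c i.succ • α (Y i) Z' = 0 := by
        rw [Fin.sum_univ_succ] at hc
        simpa only [hg, Fin.cons_zero, Fin.cons_succ] using hc
      have hcsucc : ∀ i : Fin r, c i.succ = 0 := by
        have hPsum : ∑ i : Fin r, c i.succ • (bU i + t • P (α (Y i) Z)) = (0 : U) := by
          have := congrArg P hsum
          simp only [map_add, map_sum, map_smul, map_zero] at this
          have hPw : P w = 0 :=
            Submodule.orthogonalProjectionOnto_apply_of_mem_orthogonal
              ((Submodule.mem_orthogonal' U w).mpr hperpU)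
          rw [hXZ'] at this
          simp only [map_smul, hPw, smul_zero, zero_add] at this
          convert this using 2 with i
          rw [hYZ' i]
          push_cast [map_add, map_smul]
          rw [hP, Submodule.orthogonalProjectionOnto_mem_subspace_eq_self]
        have hmv : (1 + t • C).mulVec (fun i : Fin r => c i.succ) = 0 := by
          funext j
          have := congrArg (fun u : U => bU.repr u j) hPsum
          simp only [map_sum, map_smul, map_add, Basis.repr_self] at this
          simpa [Matrix.mulVec, dotProduct, Matrix.one_apply, Matrix.add_apply,
            Matrix.smul_apply, hC, Finsupp.single_apply, add_mul, mul_comm, eq_comm,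
            Finset.sum_add_distrib, mul_add] using this
        intro i
        have : (fun i : Fin r => c i.succ) = 0 := by
          have h1 := congrArg ((1 + t • C)⁻¹.mulVec) hmv
          rwa [Matrix.mulVec_mulVec, Matrix.nonsing_inv_mul _ htdet, Matrix.one_mulVec,
            Matrix.mulVec_zero] at h1
        exact congrFun this i
      -- then the first coefficient vanishes too
      have hc0 : c 0 = 0 := by
        have : c 0 • α X Z' = 0 := by
          rw [← hsum]
          simp [hcsucc]
        rw [hXZ', smul_smul] at this
        rcases smul_eq_zero.mp this with h | h
        · exact (mul_eq_zero.mp h).resolve_right ht0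
        · exact absurd h hw
      intro i
      refine Fin.cases hc0 hcsucc i
    -- the r+1 independent vectors live in the range of α(·, Z')
    have hrange : ∀ i, g i ∈ LinearMap.range (α.flip Z') := by
      intro i
      refine Fin.cases ⟨X, rfl⟩ (fun j => ⟨Y j, rfl⟩) i
    have hcard : r + 1 ≤ f Z' := by
      have hli' : LinearIndependent ℝ (fun i => (⟨g i, hrange i⟩ :
          LinearMap.range (α.flip Z'))) := by
        apply LinearIndependent.of_comp (LinearMap.range (α.flip Z')).subtype
        exact hli
      simpa using hli'.fintype_card_le_finrank
    have := hmax Z' hZ'Γ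
    have : f Z₀ = r := rfl
    omega
  -- the kernel of α(·,Z₀) is contained in the kernel of α, since S = ⊤
  have hker : LinearMap.ker (α.flip Z₀) ≤ LinearMap.ker α := by
    intro X hX
    have hX' : α X Z₀ = 0 := hX
    rw [LinearMap.mem_ker]
    apply LinearMap.ext
    intro Yv
    have hperpS : ∀ v ∈ S, ⟪α X Yv, v⟫ = 0 := by
      intro v hv
      induction hv using Submodule.span_induction with
      | mem v hvmem =>
        obtain ⟨T, Z'', hZ'', rfl⟩ := hvmem
        rw [perp X Yv T Z'' hZ'', key X hX' Z'' hZ'']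
        simp
      | zero => simp
      | add v₁ v₂ _ _ h₁ h₂ => rw [inner_add_right, h₁, h₂, add_zero]
      | smul a v _ h => rw [real_inner_smul_right, h, mul_zero]
    have : ⟪α X Yv, α X Yv⟫ = 0 := hperpS _ (hStop ▸ Submodule.mem_top)
    simpa using inner_self_eq_zero.mp this
  -- dimension count
  have h1 := LinearMap.finrank_range_add_finrank_ker (α.flip Z₀)
  have h2 : finrank ℝ (LinearMap.ker (α.flip Z₀)) ≤ finrank ℝ (ker α) :=
    Submodule.finrank_mono hker
  have h3 : finrank ℝ (LinearMap.range (α.flip Z₀)) ≤ finrank ℝ W :=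
    Submodule.finrank_le _
  omega
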